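/- arXiv:2411.18244 — 3 statements merged into one kernel-verified Lean document; each statement's English description precedes it below -/
import Mathlib

section
/- Let n ≥ 3 and let T_max = max_{v ∈ ZMod n} Tr(v) be the maximum transmission of the power graph P(C_n) of the cyclic group ZMod n. Then the distance spectral radius of the power graph of the dihedral group of order 2n satisfies ρ₁(P(D_{2n})) ≤ ((T_max + 2n − 2) + √((T_max − 2n + 2)² + 8n(2n − 1))) / 2. -/
open scoped Classical

noncomputable section

/-- The power graph of a (multiplicative) group: distinct `x, y` are adjacent iff one is
a natural-number power of the other. -/
def powerGraph (G : Type*) [Group G] : SimpleGraph G where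
  Adj x y := x ≠ y ∧ ∃ m : ℕ, x = y ^ m ∨ y = x ^ m
  symm := by
    constructor
    rintro x y ⟨hxy, m, hm⟩
    exact ⟨hxy.symm, m, hm.symm⟩
  loopless := by
    constructor
    rintro x ⟨hx, -⟩
    exact hx rfl

/-- The power graph of an additive group: distinct `x, y` are adjacent iff one is a
natural-number multiple (additive power) of the other. -/
def addPowerGraph (G : Type*) [AddGroup G] : SimpleGraph G where
  Adj x y := x ≠ y ∧ ∃ m : ℕ, x = m • y ∨ y = m • x
  symm := by
    constructor
    rintro x y ⟨hxy, m, hm⟩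
    exact ⟨hxy.symm, m, hm.symm⟩
  loopless := by
    constructor
    rintro x ⟨hx, -⟩
    exact hx rfl

/-- The distance matrix of a graph on a finite vertex set. -/
def distMatrix {V : Type*} [Fintype V] (G : SimpleGraph V) : Matrix V V ℝ :=
  fun x y => (G.dist x y : ℝ)

/-- The transmission of a vertex: the sum of the distances to all vertices. -/
def transmission {V : Type*} [Fintype V] (G : SimpleGraph V) (v : V) : ℕ :=
  ∑ w, G.dist v w

section Aux
open DihedralGroup SimpleGraph

lemma pg_adj_one {G : Type*} [Group G] {x : G} (hx : x ≠ 1) :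
    (powerGraph G).Adj 1 x := ⟨fun h => hx h.symm, 0, Or.inl (pow_zero x).symm⟩

lemma apg_adj_zero {G : Type*} [AddGroup G] {x : G} (hx : x ≠ 0) :
    (addPowerGraph G).Adj 0 x := ⟨fun h => hx h.symm, 0, Or.inl (zero_nsmul x).symm⟩

lemma dist_le_two_of_hub {V : Type*} (G : SimpleGraph V) (hub : V)
    (h : ∀ x, x ≠ hub → G.Adj hub x) (x y : V) : G.dist x y ≤ 2 := by
  by_cases hxy : x = y
  · subst hxy; simp [SimpleGraph.dist_self]
  by_cases hx : x = hub
  · subst hx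
    exact (SimpleGraph.dist_le (Walk.cons (h y fun h' => hxy h'.symm) Walk.nil)).trans (by simp)
  by_cases hy : y = hub
  · subst hy
    exact (SimpleGraph.dist_le (Walk.cons (h x hx).symm Walk.nil)).trans (by simp)
  · exact SimpleGraph.dist_le (Walk.cons (h x hx).symm (Walk.cons (h y hy) Walk.nil))

lemma reachable_of_hub {V : Type*} (G : SimpleGraph V) (hub : V)
    (h : ∀ x, x ≠ hub → G.Adj hub x) (x y : V) : G.Reachable x y := by
  have hx : G.Reachable hub x := by
    by_cases hx : x = hub
    · exact hx ▸ Reachable.refl _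
    · exact (h x hx).reachable
  have hy : G.Reachable hub y := by
    by_cases hy : y = hub
    · exact hy ▸ Reachable.refl _
    · exact (h y hy).reachable
  exact hx.symm.trans hy

-- power of rotation
lemma r_pow' {n : ℕ} (j : ZMod n) (m : ℕ) : (r j : DihedralGroup n) ^ m = r (m • j) := by
  induction m with
  | zero => rw [pow_zero, zero_nsmul, one_def]
  | succ k ih => rw [pow_succ, ih, r_mul_r, succ_nsmul]

-- adjacency transfer
lemma adj_r_iff {n : ℕ} (i j : ZMod n) :
    (powerGraph (DihedralGroup n)).Adj (r i) (r j) ↔ (addPowerGraph (ZMod n)).Adj i j := by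
  constructor
  · rintro ⟨hne, m, hm | hm⟩
    · rw [r_pow'] at hm
      exact ⟨fun h => hne (by rw [h]), m, Or.inl (r.injEq _ _ ▸ hm : i = m • j)⟩
    · rw [r_pow'] at hm
      exact ⟨fun h => hne (by rw [h]), m, Or.inr (r.injEq _ _ ▸ hm : j = m • i)⟩
  · rintro ⟨hne, m, hm | hm⟩
    · exact ⟨fun h => hne (r.injEq _ _ ▸ h), m, Or.inl (by rw [r_pow', ← hm])⟩
    · exact ⟨fun h => hne (r.injEq _ _ ▸ h), m, Or.inr (by rw [r_pow', ← hm])⟩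

variable {n : ℕ} [NeZero n]

abbrev GD (n : ℕ) := powerGraph (DihedralGroup n)
abbrev GA (n : ℕ) := addPowerGraph (ZMod n)

lemma hubD : ∀ x : DihedralGroup n, x ≠ 1 → (GD n).Adj 1 x := fun _ hx => pg_adj_one hx
lemma hubA : ∀ x : ZMod n, x ≠ 0 → (GA n).Adj 0 x := fun _ hx => apg_adj_zero hx

lemma distD_le_two (x y : DihedralGroup n) : (GD n).dist x y ≤ 2 :=
  dist_le_two_of_hub _ 1 hubD x y

lemma distA_le_two (x y : ZMod n) : (GA n).dist x y ≤ 2 :=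
  dist_le_two_of_hub _ 0 hubA x y

-- dist of rotations dominated by dist in additive power graph
lemma distD_r_le (i j : ZMod n) : (GD n).dist (r i) (r j) ≤ (GA n).dist i j := by
  by_cases hij : i = j
  · subst hij; simp [SimpleGraph.dist_self]
  by_cases hadj : (GA n).Adj i j
  · have h1 : (GD n).dist (r i) (r j) = 1 :=
      SimpleGraph.dist_eq_one_iff_adj.mpr ((adj_r_iff i j).mpr hadj)
    have h2 : (GA n).dist i j = 1 := SimpleGraph.dist_eq_one_iff_adj.mpr hadj
    omega
  · have h2 : (GA n).dist i j = 2 := by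
      have hr : (GA n).Reachable i j := reachable_of_hub _ 0 hubA i j
      have h0 : (GA n).dist i j ≠ 0 := fun h =>
        hij (hr.dist_eq_zero_iff.mp h)
      have h1 : (GA n).dist i j ≠ 1 := fun h =>
        hadj (SimpleGraph.dist_eq_one_iff_adj.mp h)
      have := distA_le_two i j
      omega
    rw [h2]; exact distD_le_two _ _

-- the equivalence
def dihEquiv (n : ℕ) : ZMod n ⊕ ZMod n ≃ DihedralGroup n where
  toFun s := match s with | .inl i => r i | .inr i => sr i
  invFun g := match g with | r i => .inl i | sr i => .inr i
  left_inv s := by rcases s with i | i <;> rfl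
  right_inv g := by rcases g with i | i <;> rfl

lemma sum_dihedral (f : DihedralGroup n → ℝ) :
    ∑ w, f w = (∑ i, f (r i)) + ∑ i, f (sr i) := by
  rw [← Equiv.sum_comp (dihEquiv n) f, Fintype.sum_sum_type]
  rfl

set_option linter.unusedSectionVars false

lemma sr_ne_one (i : ZMod n) : (sr i : DihedralGroup n) ≠ 1 := by
  rw [one_def]; exact fun h => by cases h

lemma dist_sr_one (i : ZMod n) : (GD n).dist (sr i) 1 = 1 :=
  SimpleGraph.dist_eq_one_iff_adj.mpr (hubD _ (sr_ne_one i)).symm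

-- B1
lemma B1 (i : ZMod n) :
    ∑ j, ((GD n).dist (r i) (r j) : ℝ) ≤ (Finset.univ.sup (transmission (GA n)) : ℕ) := by
  have h1 : ∑ j, (GD n).dist (r i) (r j) ≤ transmission (GA n) i :=
    Finset.sum_le_sum fun j _ => distD_r_le i j
  have h2 : transmission (GA n) i ≤ Finset.univ.sup (transmission (GA n)) :=
    Finset.le_sup (Finset.mem_univ i)
  calc ∑ j, ((GD n).dist (r i) (r j) : ℝ)
      = ((∑ j, (GD n).dist (r i) (r j) : ℕ) : ℝ) := by push_cast; ring
    _ ≤ _ := by exact_mod_cast h1.trans h2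

-- B2
lemma B2 (i : ZMod n) :
    ∑ j, ((GD n).dist (r i) (sr j) : ℝ) ≤ 2 * n := by
  calc ∑ j, ((GD n).dist (r i) (sr j) : ℝ) ≤ ∑ _j : ZMod n, (2 : ℝ) :=
        Finset.sum_le_sum fun j _ => by exact_mod_cast distD_le_two (r i) (sr j)
    _ = 2 * n := by simp [ZMod.card]; ring

-- B3
lemma B3 (i : ZMod n) :
    ∑ j, ((GD n).dist (sr i) (r j) : ℝ) ≤ 2 * n - 1 := by
  have h0 : ((GD n).dist (sr i) (r 0) : ℝ) = 1 := by
    rw [← one_def, dist_sr_one]; norm_num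
  rw [← Finset.sum_erase_add _ _ (Finset.mem_univ (0 : ZMod n)), h0]
  have : ∑ j ∈ Finset.univ.erase (0 : ZMod n), ((GD n).dist (sr i) (r j) : ℝ)
      ≤ ∑ _j ∈ Finset.univ.erase (0 : ZMod n), (2 : ℝ) :=
    Finset.sum_le_sum fun j _ => by exact_mod_cast distD_le_two (sr i) (r j)
  have hcard : ((Finset.univ.erase (0 : ZMod n)).card : ℝ) = n - 1 := by
    rw [Finset.card_erase_of_mem (Finset.mem_univ _)]
    have hn : 1 ≤ Fintype.card (ZMod n) := Fintype.card_pos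
    rw [Finset.card_univ]
    push_cast [Nat.cast_sub hn]
    rw [ZMod.card]
  rw [Finset.sum_const, nsmul_eq_mul] at this
  rw [hcard] at this
  have hn1 : (1:ℝ) ≤ n := by
    have := NeZero.pos n; exact_mod_cast this
  linarith

-- B4
lemma B4 (i : ZMod n) :
    ∑ j, ((GD n).dist (sr i) (sr j) : ℝ) ≤ 2 * n - 2 := by
  have h0 : ((GD n).dist (sr i) (sr i) : ℝ) = 0 := by
    rw [SimpleGraph.dist_self]; norm_num
  rw [← Finset.sum_erase_add _ _ (Finset.mem_univ i), h0]
  have : ∑ j ∈ Finset.univ.erase i, ((GD n).dist (sr i) (sr j) : ℝ)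
      ≤ ∑ _j ∈ Finset.univ.erase i, (2 : ℝ) :=
    Finset.sum_le_sum fun j _ => by exact_mod_cast distD_le_two (sr i) (sr j)
  have hcard : ((Finset.univ.erase i).card : ℝ) = n - 1 := by
    rw [Finset.card_erase_of_mem (Finset.mem_univ _)]
    have hn : 1 ≤ Fintype.card (ZMod n) := Fintype.card_pos
    rw [Finset.card_univ]
    push_cast [Nat.cast_sub hn]
    rw [ZMod.card]
  rw [Finset.sum_const, nsmul_eq_mul] at this
  rw [hcard] at this
  linarith

lemma exists_eigen {V : Type*} [Fintype V] [DecidableEq V] (A : Matrix V V ℝ) {μ : ℝ}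
    (h : μ ∈ spectrum ℝ A) : ∃ x : V → ℝ, x ≠ 0 ∧ A.mulVec x = μ • x := by
  rw [← AlgEquiv.spectrum_eq (Matrix.toLinAlgEquiv' : Matrix V V ℝ ≃ₐ[ℝ] _) A] at h
  have hev : Module.End.HasEigenvalue (Matrix.toLinAlgEquiv' A) μ :=
    Module.End.HasEigenvalue.of_mem_spectrum h
  obtain ⟨x, hx⟩ := hev.exists_hasEigenvector
  refine ⟨x, hx.2, ?_⟩
  have := hx.apply_eq_smul
  rwa [Matrix.toLinAlgEquiv'_apply] at this

theorem aux_dihedral_bound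
    (n : ℕ) [NeZero n] (hn : 3 ≤ n) (rho Tmax : ℝ)
    (hrho : IsGreatest (spectrum ℝ (distMatrix (powerGraph (DihedralGroup n)))) rho)
    (hTmax : Tmax =
      ((Finset.univ.sup (transmission (addPowerGraph (ZMod n))) : ℕ) : ℝ)) :
    rho ≤ ((Tmax + 2 * n - 2) +
      Real.sqrt ((Tmax - 2 * n + 2) ^ 2 + 8 * n * (2 * (n : ℝ) - 1))) / 2 := by
  have hn3 : (3 : ℝ) ≤ n := by exact_mod_cast hn
  have hT0 : 0 ≤ Tmax := by rw [hTmax]; positivity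
  set s := Real.sqrt ((Tmax - 2 * n + 2) ^ 2 + 8 * n * (2 * (n : ℝ) - 1)) with hs_def
  -- the RHS dominates both Tmax and 2n-2
  have hsabs : |Tmax - 2 * n + 2| ≤ s := by
    rw [hs_def, ← Real.sqrt_sq_eq_abs]
    apply Real.sqrt_le_sqrt
    nlinarith
  have hRHS_T : Tmax ≤ ((Tmax + 2 * n - 2) + s) / 2 := by
    rcases abs_cases (Tmax - 2 * n + 2) with ⟨h, _⟩ | ⟨h, _⟩ <;> rw [h] at hsabs <;> linarith
  have hRHS_n : 2 * (n : ℝ) - 2 ≤ ((Tmax + 2 * n - 2) + s) / 2 := by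
    rcases abs_cases (Tmax - 2 * n + 2) with ⟨h, _⟩ | ⟨h, _⟩ <;> rw [h] at hsabs <;> linarith
  by_cases hcase1 : rho ≤ Tmax
  · linarith
  by_cases hcase2 : rho ≤ 2 * (n : ℝ) - 2
  · linarith
  push_neg at hcase1 hcase2
  have hrho_pos : 0 < rho := lt_of_le_of_lt hT0 hcase1
  set A := distMatrix (powerGraph (DihedralGroup n)) with hA_def
  obtain ⟨x, hx0, hAx⟩ := exists_eigen A hrho.1
  have hA : ∀ v w, 0 ≤ A v w := fun v w => Nat.cast_nonneg _
  have heig : ∀ v, ∑ w, A v w * x w = rho * x v := by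
    intro v
    have := congrFun hAx v
    simpa [Matrix.mulVec, dotProduct] using this
  have habs : ∀ v, rho * |x v| ≤ ∑ w, A v w * |x w| := by
    intro v
    have h1 : rho * |x v| = |rho * x v| := by rw [abs_mul, abs_of_pos hrho_pos]
    rw [h1, ← heig v]
    calc |∑ w, A v w * x w| ≤ ∑ w, |A v w * x w| := Finset.abs_sum_le_sum_abs _ _
      _ = ∑ w, A v w * |x w| := Finset.sum_congr rfl fun w _ => by
          rw [abs_mul, abs_of_nonneg (hA v w)]
  have hne : (Finset.univ : Finset (ZMod n)).Nonempty := Finset.univ_nonempty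
  set M := Finset.univ.sup' hne (fun i : ZMod n => |x (r i)|) with hM_def
  set N := Finset.univ.sup' hne (fun i : ZMod n => |x (sr i)|) with hN_def
  have hyM : ∀ j, |x (r j)| ≤ M := fun j => Finset.le_sup' (fun i : ZMod n => |x (r i)|) (Finset.mem_univ j)
  have hyN : ∀ j, |x (sr j)| ≤ N := fun j => Finset.le_sup' (fun i : ZMod n => |x (sr i)|) (Finset.mem_univ j)
  have hM0 : 0 ≤ M := (abs_nonneg _).trans (hyM 0)
  have hN0 : 0 ≤ N := (abs_nonneg _).trans (hyN 0)
  -- row inequalities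
  have hrot : ∀ i, rho * |x (r i)| ≤ Tmax * M + (2 * n) * N := by
    intro i
    refine (habs (r i)).trans ?_
    rw [sum_dihedral (fun w => A (r i) w * |x w|)]
    have t1 : ∑ j, A (r i) (r j) * |x (r j)| ≤ (∑ j, A (r i) (r j)) * M := by
      rw [Finset.sum_mul]
      exact Finset.sum_le_sum fun j _ => mul_le_mul_of_nonneg_left (hyM j) (hA _ _)
    have t2 : ∑ j, A (r i) (sr j) * |x (sr j)| ≤ (∑ j, A (r i) (sr j)) * N := by
      rw [Finset.sum_mul]
      exact Finset.sum_le_sum fun j _ => mul_le_mul_of_nonneg_left (hyN j) (hA _ _)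
    have t3 : (∑ j, A (r i) (r j)) * M ≤ Tmax * M := by
      refine mul_le_mul_of_nonneg_right ?_ hM0
      rw [hTmax]; exact B1 i
    have t4 : (∑ j, A (r i) (sr j)) * N ≤ (2 * n) * N :=
      mul_le_mul_of_nonneg_right (B2 i) hN0
    linarith
  have href : ∀ i, rho * |x (sr i)| ≤ (2 * n - 1) * M + (2 * n - 2) * N := by
    intro i
    refine (habs (sr i)).trans ?_
    rw [sum_dihedral (fun w => A (sr i) w * |x w|)]
    have t1 : ∑ j, A (sr i) (r j) * |x (r j)| ≤ (∑ j, A (sr i) (r j)) * M := by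
      rw [Finset.sum_mul]
      exact Finset.sum_le_sum fun j _ => mul_le_mul_of_nonneg_left (hyM j) (hA _ _)
    have t2 : ∑ j, A (sr i) (sr j) * |x (sr j)| ≤ (∑ j, A (sr i) (sr j)) * N := by
      rw [Finset.sum_mul]
      exact Finset.sum_le_sum fun j _ => mul_le_mul_of_nonneg_left (hyN j) (hA _ _)
    have t3 : (∑ j, A (sr i) (r j)) * M ≤ (2 * n - 1) * M :=
      mul_le_mul_of_nonneg_right (B3 i) hM0
    have t4 : (∑ j, A (sr i) (sr j)) * N ≤ (2 * n - 2) * N :=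
      mul_le_mul_of_nonneg_right (B4 i) hN0
    linarith
  -- apply at maximizers
  obtain ⟨i0, _, hMi⟩ := Finset.exists_mem_eq_sup' hne (fun i : ZMod n => |x (r i)|)
  obtain ⟨j0, _, hNj⟩ := Finset.exists_mem_eq_sup' hne (fun i : ZMod n => |x (sr i)|)
  have hM_eq : rho * M ≤ Tmax * M + (2 * n) * N := by
    have h := hrot i0; rw [← hMi] at h; exact h
  have hN_eq : rho * N ≤ (2 * n - 1) * M + (2 * n - 2) * N := by
    have h := href j0; rw [← hNj] at h; exact h
  -- some component positive
  have hMN : 0 < M ∨ 0 < N := by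
    obtain ⟨v, hv⟩ := Function.ne_iff.mp hx0
    have hyv : 0 < |x v| := abs_pos.mpr hv
    rcases v with i | i
    · exact Or.inl (lt_of_lt_of_le hyv (hyM i))
    · exact Or.inr (lt_of_lt_of_le hyv (hyN i))
  have hN_pos : 0 < N := by
    rcases lt_or_eq_of_le hN0 with h | h
    · exact h
    have hMz : M ≤ 0 := by nlinarith
    have hM_z : M = 0 := le_antisymm hMz hM0
    rcases hMN with h' | h' <;> [linarith; linarith]
  have hM_pos : 0 < M := by
    rcases lt_or_eq_of_le hM0 with h | h
    · exact h
    have : N ≤ 0 := by nlinarith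
    linarith
  -- the quadratic inequality
  have h1 : (rho - Tmax) * M ≤ 2 * n * N := by linarith
  have h2 : (rho - (2 * n - 2)) * N ≤ (2 * n - 1) * M := by linarith
  have hmul := mul_le_mul h1 h2 (by nlinarith) (by positivity)
  have key : (rho - Tmax) * (rho - (2 * n - 2)) ≤ 2 * n * (2 * n - 1) := by
    have h3 : ((rho - Tmax) * (rho - (2 * n - 2))) * (M * N) ≤ (2 * n * (2 * n - 1)) * (M * N) := by
      linear_combination hmul
    exact le_of_mul_le_mul_right h3 (mul_pos hM_pos hN_pos)
  have h4 : (2 * rho - (Tmax + 2 * n - 2)) ^ 2 ≤ (Tmax - 2 * n + 2) ^ 2 + 8 * n * (2 * (n : ℝ) - 1) := by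
    nlinarith [key]
  have h5 : 2 * rho - (Tmax + 2 * n - 2) ≤ s := by
    calc 2 * rho - (Tmax + 2 * n - 2) ≤ |2 * rho - (Tmax + 2 * n - 2)| := le_abs_self _
      _ = Real.sqrt ((2 * rho - (Tmax + 2 * n - 2)) ^ 2) := (Real.sqrt_sq_eq_abs _).symm
      _ ≤ s := Real.sqrt_le_sqrt h4
  linarith

end Aux

/-- Distance-spectral-radius upper bound for the power graph of the dihedral group of
order `2n`, in terms of the maximum transmission of the power graph of `ZMod n`. -/
theorem distSpectralRadius_powerGraph_dihedral_upper_bound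
    (n : ℕ) [NeZero n] (hn : 3 ≤ n) (rho Tmax : ℝ)
    (hrho : IsGreatest (spectrum ℝ (distMatrix (powerGraph (DihedralGroup n)))) rho)
    (hTmax : Tmax =
      ((Finset.univ.sup (transmission (addPowerGraph (ZMod n))) : ℕ) : ℝ)) :
    rho ≤ ((Tmax + 2 * n - 2) +
      Real.sqrt ((Tmax - 2 * n + 2) ^ 2 + 8 * n * (2 * (n : ℝ) - 1))) / 2 :=
  aux_dihedral_bound n hn rho Tmax hrho hTmax
end
end

section
/- Let n ≥ 2 and let T_avg = (∑_{v ∈ ZMod 2n} Tr(v)) / (2n) be the average transmission of the power graph P(C_{2n}) of the cyclic group ZMod 2n. Then the distance spectral radius of the power graph of the dicyclic group of order 4n satisfies ρ₁(P(Q_{4n})) ≥ ((T_avg + 4n − 3) + √((T_avg − 4n + 3)² + 16(2n − 1)²)) / 2. -/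
open scoped Classical

noncomputable section

/-! ### Auxiliary lemmas -/

open Matrix in
lemma rayleigh_upper {m : Type*} [Fintype m] [DecidableEq m] [Nonempty m] {A : Matrix m m ℝ}
    (hA : A.IsHermitian) (v : m → ℝ) :
    ∃ μ ∈ spectrum ℝ A, v ⬝ᵥ (A *ᵥ v) ≤ μ * (v ⬝ᵥ v) := by
  obtain ⟨i₀, -, hmax⟩ := Finset.exists_max_image Finset.univ hA.eigenvalues
    ⟨Classical.arbitrary m, Finset.mem_univ _⟩
  refine ⟨hA.eigenvalues i₀, hA.eigenvalues_mem_spectrum_real i₀, ?_⟩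
  set U : Matrix m m ℝ := (hA.eigenvectorUnitary : Matrix m m ℝ) with hUdef
  have hstar : star U = Uᵀ := by
    ext i j
    simp [Matrix.star_eq_conjTranspose, Matrix.conjTranspose_apply]
  have hUU : U * star U = 1 := (Matrix.mem_unitaryGroup_iff).mp hA.eigenvectorUnitary.2
  set w : m → ℝ := star U *ᵥ v with hwdef
  have hvU : ∀ z : m → ℝ, v ⬝ᵥ (U *ᵥ z) = w ⬝ᵥ z := by
    intro z
    rw [dotProduct_mulVec, hwdef, hstar, mulVec_transpose]
  have hdiag : (Matrix.diagonal (RCLike.ofReal ∘ hA.eigenvalues) : Matrix m m ℝ)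
      = Matrix.diagonal hA.eigenvalues := by
    congr 1
  have hAv : A *ᵥ v = U *ᵥ (Matrix.diagonal hA.eigenvalues *ᵥ w) := by
    conv_lhs => rw [hA.spectral_theorem]
    rw [hdiag, Unitary.conjStarAlgAut_apply, ← mulVec_mulVec, ← mulVec_mulVec]
  have hQ : v ⬝ᵥ (A *ᵥ v) = ∑ i, hA.eigenvalues i * (w i * w i) := by
    rw [hAv, hvU]
    simp only [dotProduct, mulVec_diagonal]
    exact Finset.sum_congr rfl fun i _ => by ring
  have hnorm : v ⬝ᵥ v = ∑ i, w i * w i := by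
    have : v ⬝ᵥ v = v ⬝ᵥ (U *ᵥ w) := by
      rw [mulVec_mulVec, hUU, one_mulVec]
    rw [this, hvU]
    rfl
  rw [hQ, hnorm, Finset.mul_sum]
  apply Finset.sum_le_sum
  intro i _
  exact mul_le_mul_of_nonneg_right (hmax i (Finset.mem_univ _)) (mul_self_nonneg _)

lemma hub_dist {V : Type*} (G : SimpleGraph V) (e : V) (he : ∀ x, x ≠ e → G.Adj x e)
    (x y : V) : G.dist x y = if x = y then 0 else if G.Adj x y then 1 else 2 := by
  split_ifs with h1 h2
  · subst h1; exact SimpleGraph.dist_self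
  · exact SimpleGraph.dist_eq_one_iff_adj.mpr h2
  · have hxe : x ≠ e := by
      rintro rfl
      exact h2 ((he y (fun hy => h1 hy.symm)).symm)
    have hye : y ≠ e := by
      rintro rfl
      exact h2 (he x hxe)
    have hle : G.dist x y ≤ 2 := by
      have := SimpleGraph.dist_le (SimpleGraph.Walk.cons (he x hxe)
        (SimpleGraph.Walk.cons ((he y hye).symm) SimpleGraph.Walk.nil))
      simpa using this
    have hne0 : G.dist x y ≠ 0 := by
      intro h0
      rcases SimpleGraph.dist_eq_zero_iff_eq_or_not_reachable.mp h0 with h | h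
      · exact h1 h
      · exact h ⟨SimpleGraph.Walk.cons (he x hxe)
          (SimpleGraph.Walk.cons ((he y hye).symm) SimpleGraph.Walk.nil)⟩
    have hne1 : G.dist x y ≠ 1 := fun h => h2 (SimpleGraph.dist_eq_one_iff_adj.mp h)
    omega

namespace QuaternionGroup
variable {n : ℕ}

lemma a_pow (i : ZMod (2 * n)) (m : ℕ) : (a i : QuaternionGroup n) ^ m = a (m • i) := by
  induction m with
  | zero => rw [pow_zero, zero_smul, one_def]
  | succ k ih => rw [pow_succ, ih, a_mul_a, succ_nsmul]

lemma nadd (hn : n ≠ 0) : ((n : ZMod (2 * n)) + n) = 0 := by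
  have : ((n : ZMod (2 * n)) + n) = ((2 * n : ℕ) : ZMod (2 * n)) := by push_cast; ring
  rw [this, ZMod.natCast_self]

lemma nzero (hn : n ≠ 0) : (n : ZMod (2 * n)) ≠ 0 := by
  haveI : NeZero (2 * n) := ⟨by omega⟩
  intro h
  rw [ZMod.natCast_eq_zero_iff] at h
  have := Nat.le_of_dvd (by omega) h
  omega

lemma xa_pow_shape (hn : n ≠ 0) (j : ZMod (2 * n)) (m : ℕ) :
    (xa j : QuaternionGroup n) ^ m = a 0 ∨ (xa j : QuaternionGroup n) ^ m = a n ∨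
    (xa j : QuaternionGroup n) ^ m = xa j ∨
    (xa j : QuaternionGroup n) ^ m = xa (j + (n : ZMod (2 * n))) := by
  have h4 : (xa j : QuaternionGroup n) ^ 4 = 1 := xa_pow_four j
  have hmod : (xa j : QuaternionGroup n) ^ m = (xa j) ^ (m % 4) := by
    conv_lhs => rw [← Nat.div_add_mod m 4]
    rw [pow_add, pow_mul, h4, one_pow, one_mul]
  have h3 : (xa j : QuaternionGroup n) ^ 3 = xa (j + (n : ZMod (2 * n))) := by
    rw [pow_succ, xa_sq, a_mul_xa]
    congr 1
    rw [sub_eq_add_neg, neg_eq_of_add_eq_zero_right (nadd hn)]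
  have hlt : m % 4 < 4 := Nat.mod_lt _ (by norm_num)
  interval_cases h : m % 4 <;> rw [hmod]
  · left; rw [pow_zero, one_def]
  · right; right; left; rw [pow_one]
  · right; left; exact xa_sq j
  · right; right; right; exact h3

lemma adj_a_a (i j : ZMod (2 * n)) :
    (powerGraph (QuaternionGroup n)).Adj (a i) (a j) ↔
      (addPowerGraph (ZMod (2 * n))).Adj i j := by
  constructor
  · rintro ⟨hne, m, h | h⟩
    · rw [a_pow] at h
      exact ⟨fun h' => hne (by rw [h']), m, Or.inl (by injection h)⟩
    · rw [a_pow] at h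
      exact ⟨fun h' => hne (by rw [h']), m, Or.inr (by injection h)⟩
  · rintro ⟨hne, m, h | h⟩
    · exact ⟨by simpa using hne, m, Or.inl (by rw [a_pow, h])⟩
    · exact ⟨by simpa using hne, m, Or.inr (by rw [a_pow, h])⟩

lemma adj_a_xa (hn : n ≠ 0) (i j : ZMod (2 * n)) :
    (powerGraph (QuaternionGroup n)).Adj (a i) (xa j) ↔ (i = 0 ∨ i = (n : ZMod (2 * n))) := by
  constructor
  · rintro ⟨hne, m, h | h⟩
    · rcases xa_pow_shape hn j m with hs | hs | hs | hs <;> rw [hs] at h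
      · left; injection h
      · right; injection h
      · exact absurd h (by simp)
      · exact absurd h (by simp)
    · rw [a_pow] at h
      exact absurd h (by simp)
  · rintro (rfl | rfl)
    · exact ⟨(by intro h; cases h), 0, Or.inl (by rw [pow_zero, one_def])⟩
    · exact ⟨by simp, 2, Or.inl (xa_sq j).symm⟩

lemma adj_xa_xa (hn : n ≠ 0) (i j : ZMod (2 * n)) :
    (powerGraph (QuaternionGroup n)).Adj (xa i) (xa j) ↔ j = i + (n : ZMod (2 * n)) := by
  have hinv : ∀ k l : ZMod (2 * n), k = l + (n : ZMod (2 * n)) → l = k + (n : ZMod (2 * n)) := by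
    intro k l h
    rw [h, add_assoc, nadd hn, add_zero]
  constructor
  · rintro ⟨hne, m, h | h⟩
    · rcases xa_pow_shape hn j m with hs | hs | hs | hs <;> rw [hs] at h
      · exact absurd h (by intro h; cases h)
      · exact absurd h (by simp)
      · exact absurd h (fun h' => hne (by rw [h']))
      · exact hinv _ _ (by injection h)
    · rcases xa_pow_shape hn i m with hs | hs | hs | hs <;> rw [hs] at h
      · exact absurd h (by intro h; cases h)
      · exact absurd h (by simp)
      · exact absurd h (fun h' => hne (by rw [h']))
      · injection h
  · rintro rfl
    refine ⟨?_, 3, Or.inr ?_⟩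
    · simp only [ne_eq, xa.injEq]
      intro h
      exact nzero hn (by linear_combination -h)
    · rw [pow_succ, xa_sq, a_mul_xa]
      congr 1
      rw [sub_eq_add_neg, neg_eq_of_add_eq_zero_right (nadd hn)]

lemma hubQ : ∀ x : QuaternionGroup n, x ≠ 1 → (powerGraph (QuaternionGroup n)).Adj x 1 :=
  fun x hx => ⟨hx, 0, Or.inr (pow_zero x).symm⟩

lemma hubZ : ∀ x : ZMod (2 * n), x ≠ 0 → (addPowerGraph (ZMod (2 * n))).Adj x 0 :=
  fun x hx => ⟨hx, 0, Or.inr (zero_smul ℕ x).symm⟩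

lemma dist_a_a (i j : ZMod (2 * n)) :
    (powerGraph (QuaternionGroup n)).dist (a i) (a j)
      = (addPowerGraph (ZMod (2 * n))).dist i j := by
  rw [hub_dist _ 1 hubQ, hub_dist _ 0 hubZ]
  rcases eq_or_ne i j with rfl | h
  · simp
  · rw [if_neg (by simpa using h), if_neg h]
    by_cases hadj : (addPowerGraph (ZMod (2 * n))).Adj i j
    · rw [if_pos ((adj_a_a i j).mpr hadj), if_pos hadj]
    · rw [if_neg (fun hc => hadj ((adj_a_a i j).mp hc)), if_neg hadj]

lemma dist_a_xa (hn : n ≠ 0) (i j : ZMod (2 * n)) :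
    ((powerGraph (QuaternionGroup n)).dist (a i) (xa j) : ℝ)
      = 2 - (if i = 0 then 1 else 0) - (if i = (n : ZMod (2 * n)) then 1 else 0) := by
  rw [hub_dist _ 1 hubQ, if_neg (by simp : (a i : QuaternionGroup n) ≠ xa j)]
  by_cases h0 : i = 0
  · rw [if_pos ((adj_a_xa hn i j).mpr (Or.inl h0)), if_pos h0,
      if_neg (by rw [h0]; exact (Ne.symm (nzero hn)))]
    norm_num
  · by_cases h1 : i = (n : ZMod (2 * n))
    · rw [if_pos ((adj_a_xa hn i j).mpr (Or.inr h1)), if_neg h0, if_pos h1]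
      norm_num
    · rw [if_neg (fun hc => Or.elim ((adj_a_xa hn i j).mp hc) h0 h1), if_neg h0, if_neg h1]
      norm_num

lemma dist_xa_xa (hn : n ≠ 0) (i j : ZMod (2 * n)) :
    ((powerGraph (QuaternionGroup n)).dist (xa i) (xa j) : ℝ)
      = 2 - 2 * (if j = i then 1 else 0) - (if j = i + (n : ZMod (2 * n)) then 1 else 0) := by
  rw [hub_dist _ 1 hubQ]
  rcases eq_or_ne i j with rfl | hne
  · rw [if_pos rfl, if_pos rfl, if_neg (by
      intro h
      exact nzero hn (by linear_combination -h))]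
    norm_num
  · rw [if_neg (by simpa using hne)]
    by_cases hadj : j = i + (n : ZMod (2 * n))
    · rw [if_pos ((adj_xa_xa hn i j).mpr hadj), if_neg (Ne.symm hne), if_pos hadj]
      norm_num
    · rw [if_neg (fun hc => hadj ((adj_xa_xa hn i j).mp hc)), if_neg (Ne.symm hne), if_neg hadj]
      norm_num

/-- The sum-type description of `QuaternionGroup n`. -/
def qe (n : ℕ) : ZMod (2 * n) ⊕ ZMod (2 * n) ≃ QuaternionGroup n where
  toFun := Sum.elim a xa
  invFun x := match x with
    | a j => Sum.inl j
    | xa j => Sum.inr j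
  left_inv := by rintro (x | x) <;> rfl
  right_inv := by rintro (x | x) <;> rfl

lemma sum_split [NeZero n] (f : QuaternionGroup n → ℝ) :
    ∑ x, f x = (∑ i, f (a i)) + ∑ i, f (xa i) := by
  rw [← Equiv.sum_comp (qe n) f, Fintype.sum_sum_type]
  rfl

end QuaternionGroup

lemma double_sum_factor {ι κ : Type*} [Fintype ι] [Fintype κ] (g : ι → κ → ℝ) (p q : ℝ) :
    ∑ i, ∑ j, p * g i j * q = p * q * ∑ i, ∑ j, g i j := by
  simp only [Finset.mul_sum]
  exact Finset.sum_congr rfl fun i _ => Finset.sum_congr rfl fun j _ => by ring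

open Matrix in
/-- Distance-spectral-radius lower bound for the power graph of the dicyclic group of
order `4n`, in terms of the average transmission of the power graph of `ZMod (2n)`. -/
theorem distSpectralRadius_powerGraph_dicyclic_lower_bound
    (n : ℕ) [NeZero n] (hn : 2 ≤ n) (rho Tavg : ℝ)
    (hrho : IsGreatest (spectrum ℝ (distMatrix (powerGraph (QuaternionGroup n)))) rho)
    (hTavg : Tavg =
      (∑ v : ZMod (2 * n), (transmission (addPowerGraph (ZMod (2 * n))) v : ℝ)) /
        (2 * (n : ℝ))) :
    ((Tavg + 4 * n - 3) +
      Real.sqrt ((Tavg - 4 * n + 3) ^ 2 + 16 * (2 * (n : ℝ) - 1) ^ 2)) / 2 ≤ rho := by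
  classical
  haveI : NeZero (2 * n) := ⟨by have := NeZero.pos n; omega⟩
  have hn0 : n ≠ 0 := NeZero.ne n
  set Gq := powerGraph (QuaternionGroup n) with hGq
  set Gz := addPowerGraph (ZMod (2 * n)) with hGz
  set D := distMatrix Gq with hD
  set N : ℝ := (n : ℝ) with hN
  have hN2 : (2 : ℝ) ≤ N := by rw [hN]; exact_mod_cast hn
  set Δ : ℝ := (Tavg - 4 * N + 3) ^ 2 + 16 * (2 * N - 1) ^ 2 with hΔdef
  set s : ℝ := Real.sqrt Δ with hsdef
  have hs : s ^ 2 = Δ := Real.sq_sqrt (by positivity)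
  set lam : ℝ := ((Tavg + 4 * N - 3) + s) / 2 with hlam
  set α : ℝ := 4 * N - 2 with hα
  set β : ℝ := lam - Tavg with hβ
  have hαpos : 0 < α := by rw [hα]; linarith
  -- the test vector
  set v : QuaternionGroup n → ℝ := fun x => match x with
    | QuaternionGroup.a _ => α
    | QuaternionGroup.xa _ => β with hv
  -- cardinality
  have hcard : (Finset.univ : Finset (ZMod (2 * n))).card = 2 * n := by
    simp [ZMod.card]
  -- Hermitian
  have hherm : D.IsHermitian := by
    unfold Matrix.IsHermitian
    ext i j
    simp [hD, distMatrix, Matrix.conjTranspose_apply, SimpleGraph.dist_comm]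
  -- indicator sums
  have hind : ∀ c : ZMod (2 * n), ∑ i : ZMod (2 * n), (if i = c then (1 : ℝ) else 0) = 1 := by
    intro c
    simp [Finset.sum_ite_eq']
  -- block sums
  have hSAA : ∑ i : ZMod (2 * n), ∑ j : ZMod (2 * n), (Gq.dist (.a i) (.a j) : ℝ)
      = 2 * N * Tavg := by
    have h1 : ∀ i : ZMod (2 * n), ∑ j : ZMod (2 * n), (Gq.dist (.a i) (.a j) : ℝ)
        = (transmission Gz i : ℝ) := by
      intro i
      rw [transmission]
      push_cast
      exact Finset.sum_congr rfl fun j _ => by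
        rw [hGq, QuaternionGroup.dist_a_a i j]
    rw [Finset.sum_congr rfl fun i _ => h1 i]
    rw [hTavg]
    field_simp
  have hrowAX : ∀ i : ZMod (2 * n), ∑ j : ZMod (2 * n), (Gq.dist (.a i) (.xa j) : ℝ)
      = (2 * n : ℝ) * (2 - (if i = 0 then 1 else 0)
          - (if i = (n : ZMod (2 * n)) then 1 else 0)) := by
    intro i
    rw [Finset.sum_congr rfl fun j _ => QuaternionGroup.dist_a_xa hn0 i j]
    rw [Finset.sum_const, hcard, nsmul_eq_mul]
    push_cast
    ring
  have hSAX : ∑ i : ZMod (2 * n), ∑ j : ZMod (2 * n), (Gq.dist (.a i) (.xa j) : ℝ)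
      = 2 * N * (4 * N - 2) := by
    rw [Finset.sum_congr rfl fun i _ => hrowAX i]
    rw [← Finset.mul_sum]
    simp only [Finset.sum_sub_distrib, Finset.sum_const, hcard, nsmul_eq_mul, hind]
    push_cast
    ring
  have hSXA : ∑ i : ZMod (2 * n), ∑ j : ZMod (2 * n), (Gq.dist (.xa i) (.a j) : ℝ)
      = 2 * N * (4 * N - 2) := by
    rw [Finset.sum_comm]
    rw [← hSAX]
    exact Finset.sum_congr rfl fun j _ => Finset.sum_congr rfl fun i _ => by
      rw [SimpleGraph.dist_comm]
  have hSXX : ∑ i : ZMod (2 * n), ∑ j : ZMod (2 * n), (Gq.dist (.xa i) (.xa j) : ℝ)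
      = 2 * N * (4 * N - 3) := by
    have h1 : ∀ i : ZMod (2 * n), ∑ j : ZMod (2 * n), (Gq.dist (.xa i) (.xa j) : ℝ)
        = 4 * N - 3 := by
      intro i
      rw [Finset.sum_congr rfl fun j _ => QuaternionGroup.dist_xa_xa hn0 i j]
      simp only [Finset.sum_sub_distrib, Finset.sum_const, hcard, nsmul_eq_mul,
        ← Finset.mul_sum, hind]
      push_cast
      ring
    rw [Finset.sum_congr rfl fun i _ => h1 i, Finset.sum_const, hcard, nsmul_eq_mul]
    push_cast
    ring
  -- the quadratic form
  have hQexpand : v ⬝ᵥ (D *ᵥ v)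
      = ∑ x, ∑ y, v x * (Gq.dist x y : ℝ) * v y := by
    simp only [dotProduct, Matrix.mulVec, hD, distMatrix, Finset.mul_sum]
    exact Finset.sum_congr rfl fun x _ => Finset.sum_congr rfl fun y _ => by ring
  have hsplit := QuaternionGroup.sum_split (n := n)
  have hQval : v ⬝ᵥ (D *ᵥ v)
      = α * α * (2 * N * Tavg) + α * β * (2 * N * (4 * N - 2))
        + β * α * (2 * N * (4 * N - 2)) + β * β * (2 * N * (4 * N - 3)) := by
    rw [hQexpand, hsplit]
    rw [Finset.sum_congr rfl fun i _ => hsplit (fun y => v (.a i) * (Gq.dist (.a i) y : ℝ) * v y)]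
    rw [Finset.sum_congr rfl fun i _ =>
      hsplit (fun y => v (.xa i) * (Gq.dist (.xa i) y : ℝ) * v y)]
    rw [Finset.sum_add_distrib, Finset.sum_add_distrib]
    have e1 : ∑ i : ZMod (2 * n), ∑ j : ZMod (2 * n),
        v (.a i) * (Gq.dist (.a i) (.a j) : ℝ) * v (.a j) = α * α * (2 * N * Tavg) := by
      rw [show (∑ i : ZMod (2 * n), ∑ j : ZMod (2 * n),
          v (.a i) * (Gq.dist (.a i) (.a j) : ℝ) * v (.a j))
        = ∑ i : ZMod (2 * n), ∑ j : ZMod (2 * n),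
          α * (Gq.dist (.a i) (.a j) : ℝ) * α from rfl]
      rw [double_sum_factor, hSAA]
    have e2 : ∑ i : ZMod (2 * n), ∑ j : ZMod (2 * n),
        v (.a i) * (Gq.dist (.a i) (.xa j) : ℝ) * v (.xa j)
          = α * β * (2 * N * (4 * N - 2)) := by
      rw [show (∑ i : ZMod (2 * n), ∑ j : ZMod (2 * n),
          v (.a i) * (Gq.dist (.a i) (.xa j) : ℝ) * v (.xa j))
        = ∑ i : ZMod (2 * n), ∑ j : ZMod (2 * n),
          α * (Gq.dist (.a i) (.xa j) : ℝ) * β from rfl]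
      rw [double_sum_factor, hSAX]
    have e3 : ∑ i : ZMod (2 * n), ∑ j : ZMod (2 * n),
        v (.xa i) * (Gq.dist (.xa i) (.a j) : ℝ) * v (.a j)
          = β * α * (2 * N * (4 * N - 2)) := by
      rw [show (∑ i : ZMod (2 * n), ∑ j : ZMod (2 * n),
          v (.xa i) * (Gq.dist (.xa i) (.a j) : ℝ) * v (.a j))
        = ∑ i : ZMod (2 * n), ∑ j : ZMod (2 * n),
          β * (Gq.dist (.xa i) (.a j) : ℝ) * α from rfl]
      rw [double_sum_factor, hSXA]
    have e4 : ∑ i : ZMod (2 * n), ∑ j : ZMod (2 * n),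
        v (.xa i) * (Gq.dist (.xa i) (.xa j) : ℝ) * v (.xa j)
          = β * β * (2 * N * (4 * N - 3)) := by
      rw [show (∑ i : ZMod (2 * n), ∑ j : ZMod (2 * n),
          v (.xa i) * (Gq.dist (.xa i) (.xa j) : ℝ) * v (.xa j))
        = ∑ i : ZMod (2 * n), ∑ j : ZMod (2 * n),
          β * (Gq.dist (.xa i) (.xa j) : ℝ) * β from rfl]
      rw [double_sum_factor, hSXX]
    rw [e1, e2, e3, e4]
    ring
  have hnormval : v ⬝ᵥ v = 2 * N * (α * α) + 2 * N * (β * β) := by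
    rw [show v ⬝ᵥ v = ∑ x, v x * v x from rfl, hsplit]
    rw [show (∑ i : ZMod (2 * n), v (QuaternionGroup.a i) * v (QuaternionGroup.a i))
        = ∑ _i : ZMod (2 * n), α * α from rfl,
      show (∑ i : ZMod (2 * n), v (QuaternionGroup.xa i) * v (QuaternionGroup.xa i))
        = ∑ _i : ZMod (2 * n), β * β from rfl,
      Finset.sum_const, Finset.sum_const, hcard, nsmul_eq_mul]
    push_cast
    ring
  -- the two eigen-equations
  have hE2 : lam * lam - (Tavg + 4 * N - 3) * lam + ((4 * N - 3) * Tavg - (4 * N - 2) ^ 2)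
      = 0 := by
    have hs' : s ^ 2 = (Tavg - 4 * N + 3) ^ 2 + 16 * (2 * N - 1) ^ 2 := by
      rw [hs, hΔdef]
    rw [hlam]
    linear_combination hs' / 4
  have hE1 : Tavg * α + (4 * N - 2) * β = lam * α := by
    rw [hα, hβ]; ring
  have hE2' : (4 * N - 2) * α + (4 * N - 3) * β = lam * β := by
    rw [hα, hβ]
    linear_combination -hE2
  have hkey : lam * (v ⬝ᵥ v) = v ⬝ᵥ (D *ᵥ v) := by
    rw [hQval, hnormval]
    linear_combination (-2) * N * α * hE1 + (-2) * N * β * hE2'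
  have hvvpos : 0 < v ⬝ᵥ v := by
    rw [hnormval]
    have hNpos : (0 : ℝ) < N := by linarith
    nlinarith [mul_self_nonneg β, hαpos]
  obtain ⟨μ, hμ, hray⟩ := rayleigh_upper hherm v
  rw [← hkey] at hray
  have hlamμ : lam ≤ μ := (mul_le_mul_iff_of_pos_right hvvpos).mp hray
  exact le_trans hlamμ (hrho.2 hμ)
end
end

section
/- Let p and q be distinct primes and let ρ₁ be the distance spectral radius of the power graph P(Z_{pq}) of the cyclic group ZMod (p·q). Then ρ₁ satisfies the cubic equation ρ₁³ − (pq − 3)·ρ₁² − (5pq − 3p − 3q)·ρ₁ + (p²q² − 2p²q − 2pq² + p² + pq + q²) = 0. -/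
open scoped Classical

noncomputable section

namespace PGaux

/-! ### Auxiliary lemmas -/

lemma exists_nsmul_iff {n : ℕ} [NeZero n] (x y : ZMod n) :
    (∃ m : ℕ, x = m • y) ↔ Nat.gcd y.val n ∣ x.val := by
  constructor
  · rintro ⟨m, rfl⟩
    rw [nsmul_eq_mul, ZMod.val_mul]
    exact (Nat.dvd_mod_iff (Nat.gcd_dvd_right _ _)).mpr
      (Dvd.dvd.mul_left (Nat.gcd_dvd_left _ _) _)
  · intro h
    obtain ⟨k, hk⟩ := h
    have hb := Nat.gcd_eq_gcd_ab y.val n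
    have hgz : ((Nat.gcd y.val n : ℕ) : ZMod n) = y * ((Nat.gcdA y.val n : ℤ) : ZMod n) := by
      have h1 : (((Nat.gcd y.val n : ℕ) : ℤ) : ZMod n)
          = (((y.val : ℤ) * Nat.gcdA y.val n + n * Nat.gcdB y.val n : ℤ) : ZMod n) := by
        rw [← hb]
      push_cast at h1
      rw [ZMod.natCast_self, zero_mul, add_zero, ZMod.natCast_rightInverse y] at h1
      exact h1
    refine ⟨(((Nat.gcdA y.val n : ℤ) : ZMod n) * (k : ZMod n)).val, ?_⟩
    rw [nsmul_eq_mul, ZMod.natCast_rightInverse]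
    have hx : x = ((x.val : ℕ) : ZMod n) := (ZMod.natCast_rightInverse x).symm
    rw [hx, hk]
    push_cast
    rw [hgz]
    ring

lemma dvd_prime_mul_prime {p q d : ℕ} (hp : p.Prime) (hq : q.Prime) (hpq : p ≠ q)
    (h : d ∣ p * q) : d = 1 ∨ d = p ∨ d = q ∨ d = p * q := by
  have cop : Nat.Coprime p q := (Nat.coprime_primes hp hq).mpr hpq
  by_cases hpd : p ∣ d
  · by_cases hqd : q ∣ d
    · exact Or.inr (Or.inr (Or.inr
        (Nat.dvd_antisymm h (Nat.Coprime.mul_dvd_of_dvd_of_dvd cop hpd hqd))))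
    · obtain ⟨e, rfl⟩ := hpd
      have he : e ∣ q := (mul_dvd_mul_iff_left hp.pos.ne').mp h
      rcases (Nat.Prime.eq_one_or_self_of_dvd hq e he) with h1 | h1
      · exact Or.inr (Or.inl (by simp [h1]))
      · exact absurd (h1 ▸ ⟨p, mul_comm p e⟩) hqd
  · have copd : Nat.Coprime d p := Nat.Coprime.symm ((Nat.Prime.coprime_iff_not_dvd hp).mpr hpd)
    have hdq : d ∣ q := copd.dvd_of_dvd_mul_left h
    rcases (Nat.Prime.eq_one_or_self_of_dvd hq d hdq) with h1 | h1
    · exact Or.inl h1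
    · exact Or.inr (Or.inr (Or.inl h1))

/-- counting multiples in `ZMod n` -/
lemma card_multiples {n : ℕ} [NeZero n] (r s : ℕ) (hr : 0 < r) (hs : 0 < s) (hn : n = r * s) :
    (Finset.univ.filter fun x : ZMod n => s ∣ x.val).card = r := by
  subst hn
  have hb : (Finset.univ.filter fun x : ZMod (r * s) => s ∣ x.val).card
      = (Finset.univ : Finset (Fin r)).card := by
    refine Finset.card_bij'
      (fun (x : ZMod (r * s)) (_ : x ∈ Finset.univ.filter fun x : ZMod (r*s) => s ∣ x.val) =>
        (⟨x.val / s, by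
          have := ZMod.val_lt x
          exact (Nat.div_lt_iff_lt_mul hs).mpr this⟩ : Fin r))
      (fun (k : Fin r) _ => ((k.val * s : ℕ) : ZMod (r * s))) ?_ ?_ ?_ ?_
    · intro a ha
      exact Finset.mem_univ _
    · intro k hk
      refine Finset.mem_filter.mpr ⟨Finset.mem_univ _, ?_⟩
      rw [ZMod.val_natCast, Nat.mod_eq_of_lt ((Nat.mul_lt_mul_right hs).mpr k.isLt)]
      exact ⟨k.val, mul_comm _ _⟩
    · intro x hx
      have hd : s ∣ x.val := (Finset.mem_filter.mp hx).2
      simp only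
      rw [Nat.div_mul_cancel hd]
      exact ZMod.natCast_rightInverse x
    · intro k hk
      apply Fin.ext
      simp only
      rw [ZMod.val_natCast, Nat.mod_eq_of_lt ((Nat.mul_lt_mul_right hs).mpr k.isLt),
        Nat.mul_div_cancel _ hs]
  rw [hb, Finset.card_univ, Fintype.card_fin]

section Main

variable (p q : ℕ) [hp : Fact p.Prime] [hq : Fact q.Prime]

/-- class map: 0 = zero & generators, 1 = elements with gcd = q, 2 = gcd = p. -/
def kcl (x : ZMod (p * q)) : Fin 3 :=
  if Nat.gcd x.val (p * q) = q then 1 else if Nat.gcd x.val (p * q) = p then 2 else 0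

/-- block values of (distance matrix + identity) -/
def bmat : Fin 3 → Fin 3 → ℝ := fun i j =>
  if (i = 1 ∧ j = 2) ∨ (i = 2 ∧ j = 1) then 2 else 1

lemma bmat00 : bmat 0 0 = 1 := rfl
lemma bmat01 : bmat 0 1 = 1 := rfl
lemma bmat02 : bmat 0 2 = 1 := rfl
lemma bmat10 : bmat 1 0 = 1 := rfl
lemma bmat11 : bmat 1 1 = 1 := rfl
lemma bmat12 : bmat 1 2 = 2 := rfl
lemma bmat20 : bmat 2 0 = 1 := rfl
lemma bmat21 : bmat 2 1 = 2 := rfl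
lemma bmat22 : bmat 2 2 = 1 := rfl

def mstep (nc : Fin 3 → ℝ) (m : Fin 3 → Fin 3 → ℝ) : Fin 3 → Fin 3 → ℝ :=
  fun i k => ∑ j, nc j * m i j * bmat j k

set_option maxHeartbeats 1000000 in
lemma key_identity (pr qr : ℝ) (nc : Fin 3 → ℝ)
    (h0 : nc 0 = pr * qr - pr - qr + 2) (h1 : nc 1 = pr - 1) (h2 : nc 2 = qr - 1)
    (i j : Fin 3) :
    mstep nc (mstep nc (mstep nc bmat)) i j
      + (-(pr * qr)) * mstep nc (mstep nc bmat) i j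
      + (-3 * pr * qr + 3 * pr + 3 * qr - 3) * mstep nc bmat i j
      + (pr ^ 2 * qr ^ 2 - 2 * pr ^ 2 * qr - 2 * pr * qr ^ 2 + pr ^ 2 + qr ^ 2
          + 5 * pr * qr - 3 * pr - 3 * qr + 2) * bmat i j = 0 := by
  have e : ∀ i j : Fin 3, (i = 0 ∨ i = 1 ∨ i = 2) := by decide
  rcases e i j with hi | hi | hi <;> rcases e j i with hj | hj | hj <;> subst hi <;> subst hj <;>
    · simp only [mstep, Fin.sum_univ_three, bmat00, bmat01, bmat02, bmat10, bmat11, bmat12,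
        bmat20, bmat21, bmat22, h0, h1, h2]
      ring

lemma basic_facts (hpq : p ≠ q) : p ≠ p * q ∧ q ≠ p * q ∧ ¬ p ∣ q ∧ ¬ q ∣ p := by
  have h1p := hp.out.one_lt
  have h1q := hq.out.one_lt
  refine ⟨?_, ?_, ?_, ?_⟩
  · intro h; nlinarith [hp.out.pos, hq.out.pos]
  · intro h; nlinarith [hp.out.pos, hq.out.pos]
  · exact fun h => hpq ((Nat.prime_dvd_prime_iff_eq hp.out hq.out).mp h)
  · exact fun h => hpq.symm ((Nat.prime_dvd_prime_iff_eq hq.out hp.out).mp h)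

lemma eq_zero_iff_gcd [NeZero (p * q)] (x : ZMod (p * q)) :
    x = 0 ↔ Nat.gcd x.val (p * q) = p * q := by
  constructor
  · rintro rfl
    simp [ZMod.val_zero]
  · intro h
    have h2 : p * q ∣ x.val := by
      have h3 := Nat.gcd_dvd_left x.val (p * q); rwa [h] at h3
    exact (ZMod.val_eq_zero x).mp (Nat.eq_zero_of_dvd_of_lt h2 (ZMod.val_lt x))

lemma kcl_eq_one_iff (hpq : p ≠ q) (x : ZMod (p * q)) :
    kcl p q x = 1 ↔ Nat.gcd x.val (p * q) = q := by
  unfold kcl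
  split_ifs with h1 h2
  · exact iff_of_true rfl h1
  · exact iff_of_false (by decide) h1
  · exact iff_of_false (by decide) h1

lemma kcl_eq_two_iff (hpq : p ≠ q) (x : ZMod (p * q)) :
    kcl p q x = 2 ↔ Nat.gcd x.val (p * q) = p := by
  unfold kcl
  split_ifs with h1 h2
  · exact iff_of_false (by decide) (fun hh => hpq (hh.symm.trans h1))
  · exact iff_of_true rfl h2
  · exact iff_of_false (by decide) h2

lemma adj_iff_dvd [NeZero (p * q)] (x y : ZMod (p * q)) :
    (addPowerGraph (ZMod (p * q))).Adj x y ↔ x ≠ y ∧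
      (Nat.gcd x.val (p * q) ∣ Nat.gcd y.val (p * q) ∨
       Nat.gcd y.val (p * q) ∣ Nat.gcd x.val (p * q)) := by
  have key : ∀ a b : ZMod (p * q),
      (∃ m : ℕ, a = m • b) ↔ Nat.gcd b.val (p * q) ∣ Nat.gcd a.val (p * q) := by
    intro a b
    rw [exists_nsmul_iff, Nat.dvd_gcd_iff]
    exact (and_iff_left (Nat.gcd_dvd_right _ _)).symm
  constructor
  · rintro ⟨hxy, m, hm | hm⟩
    · exact ⟨hxy, Or.inr ((key x y).mp ⟨m, hm⟩)⟩
    · exact ⟨hxy, Or.inl ((key y x).mp ⟨m, hm⟩)⟩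
  · rintro ⟨hxy, h | h⟩
    · obtain ⟨m, hm⟩ := (key y x).mpr h
      exact ⟨hxy, m, Or.inr hm⟩
    · obtain ⟨m, hm⟩ := (key x y).mpr h
      exact ⟨hxy, m, Or.inl hm⟩

lemma dist_entry (hpq : p ≠ q) [NeZero (p * q)] (x y : ZMod (p * q)) :
    ((addPowerGraph (ZMod (p * q))).dist x y : ℝ)
      = bmat (kcl p q x) (kcl p q y) - if x = y then 1 else 0 := by
  obtain ⟨hppq, hqpq, hpq1, hqp1⟩ := basic_facts p q hpq
  by_cases hxy : x = y
  · subst hxy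
    rw [SimpleGraph.dist_self, if_pos rfl]
    have hb : bmat (kcl p q x) (kcl p q x) = 1 := by
      have e : ∀ i : Fin 3, bmat i i = 1 := by
        intro i
        fin_cases i <;> rfl
      exact e _
    rw [hb]
    norm_num
  · rw [if_neg hxy, sub_zero]
    by_cases hadj : (addPowerGraph (ZMod (p * q))).Adj x y
    · rw [SimpleGraph.dist_eq_one_iff_adj.mpr hadj]
      have hbad : ¬ ((kcl p q x = 1 ∧ kcl p q y = 2) ∨ (kcl p q x = 2 ∧ kcl p q y = 1)) := by
        obtain ⟨-, hdvd⟩ := (adj_iff_dvd p q x y).mp hadj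
        rintro (⟨h1, h2⟩ | ⟨h1, h2⟩)
        · rw [kcl_eq_one_iff p q hpq] at h1
          rw [kcl_eq_two_iff p q hpq] at h2
          rw [h1, h2] at hdvd
          rcases hdvd with h | h
          · exact hqp1 h
          · exact hpq1 h
        · rw [kcl_eq_two_iff p q hpq] at h1
          rw [kcl_eq_one_iff p q hpq] at h2
          rw [h1, h2] at hdvd
          rcases hdvd with h | h
          · exact hpq1 h
          · exact hqp1 h
      unfold bmat
      rw [if_neg hbad]
      norm_num
    · -- not adjacent : distance 2, classes are {1, 2}
      have hdvd : ¬ (Nat.gcd x.val (p * q) ∣ Nat.gcd y.val (p * q) ∨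
          Nat.gcd y.val (p * q) ∣ Nat.gcd x.val (p * q)) := by
        intro h
        exact hadj ((adj_iff_dvd p q x y).mpr ⟨hxy, h⟩)
      push_neg at hdvd
      obtain ⟨hd1, hd2⟩ := hdvd
      have hgx : Nat.gcd x.val (p * q) = p ∨ Nat.gcd x.val (p * q) = q := by
        rcases dvd_prime_mul_prime hp.out hq.out hpq (Nat.gcd_dvd_right x.val (p * q)) with
          h | h | h | h
        · exact absurd (by rw [h]; exact one_dvd _) hd1
        · exact Or.inl h
        · exact Or.inr h
        · exact absurd (by rw [h]; exact Nat.gcd_dvd_right y.val (p * q)) hd2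
      have hgy : Nat.gcd y.val (p * q) = p ∨ Nat.gcd y.val (p * q) = q := by
        rcases dvd_prime_mul_prime hp.out hq.out hpq (Nat.gcd_dvd_right y.val (p * q)) with
          h | h | h | h
        · exact absurd (by rw [h]; exact one_dvd _) hd2
        · exact Or.inl h
        · exact Or.inr h
        · exact absurd (by rw [h]; exact Nat.gcd_dvd_right x.val (p * q)) hd1
      have hne : Nat.gcd x.val (p * q) ≠ Nat.gcd y.val (p * q) := by
        intro h
        exact hd1 (by rw [h])
      have hx0 : x ≠ 0 := by
        intro h
        have h2 := (eq_zero_iff_gcd p q x).mp h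
        rcases hgx with hg | hg
        · rw [hg] at h2; exact hppq h2
        · rw [hg] at h2; exact hqpq h2
      have hy0 : y ≠ 0 := by
        intro h
        have h2 := (eq_zero_iff_gcd p q y).mp h
        rcases hgy with hg | hg
        · rw [hg] at h2; exact hppq h2
        · rw [hg] at h2; exact hqpq h2
      -- distance is 2
      have adj1 : (addPowerGraph (ZMod (p * q))).Adj x 0 := ⟨hx0, 0, Or.inr (by simp)⟩
      have adj2 : (addPowerGraph (ZMod (p * q))).Adj 0 y := ⟨Ne.symm hy0, 0, Or.inl (by simp)⟩
      have hle := SimpleGraph.dist_le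
        (SimpleGraph.Walk.cons adj1 (SimpleGraph.Walk.cons adj2 SimpleGraph.Walk.nil))
      simp only [SimpleGraph.Walk.length_cons, SimpleGraph.Walk.length_nil] at hle
      have hne0 : (addPowerGraph (ZMod (p * q))).dist x y ≠ 0 := by
        intro h
        exact hxy ((SimpleGraph.Reachable.dist_eq_zero_iff
          ⟨SimpleGraph.Walk.cons adj1 (SimpleGraph.Walk.cons adj2 SimpleGraph.Walk.nil)⟩).mp h)
      have hne1 : (addPowerGraph (ZMod (p * q))).dist x y ≠ 1 := by
        intro h
        exact hadj (SimpleGraph.dist_eq_one_iff_adj.mp h)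
      have hdist : (addPowerGraph (ZMod (p * q))).dist x y = 2 := by omega
      rw [hdist]
      have hbad : ((kcl p q x = 1 ∧ kcl p q y = 2) ∨ (kcl p q x = 2 ∧ kcl p q y = 1)) := by
        rcases hgx with hg | hg <;> rcases hgy with hg' | hg'
        · exact absurd (hg.trans hg'.symm) hne
        · exact Or.inr ⟨(kcl_eq_two_iff p q hpq x).mpr hg, (kcl_eq_one_iff p q hpq y).mpr hg'⟩
        · exact Or.inl ⟨(kcl_eq_one_iff p q hpq x).mpr hg, (kcl_eq_two_iff p q hpq y).mpr hg'⟩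
        · exact absurd (hg.trans hg'.symm) hne
      unfold bmat
      rw [if_pos hbad]
      norm_num

lemma card_kcl_one (hpq : p ≠ q) [NeZero (p * q)] :
    (Finset.univ.filter fun x : ZMod (p * q) => kcl p q x = 1).card = p - 1 := by
  obtain ⟨hppq, hqpq, hpq1, hqp1⟩ := basic_facts p q hpq
  have hset : (Finset.univ.filter fun x : ZMod (p * q) => kcl p q x = 1)
      = (Finset.univ.filter fun x : ZMod (p * q) => q ∣ x.val).erase 0 := by
    ext x
    simp only [Finset.mem_filter, Finset.mem_univ, true_and, Finset.mem_erase]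
    rw [kcl_eq_one_iff p q hpq]
    constructor
    · intro h
      refine ⟨?_, Dvd.dvd.trans (dvd_of_eq h.symm) (Nat.gcd_dvd_left _ _)⟩
      intro hx0
      have h2 := (eq_zero_iff_gcd p q x).mp hx0
      rw [h] at h2
      exact hqpq h2
    · rintro ⟨hx0, hdvd⟩
      have hq_dvd_gcd : q ∣ Nat.gcd x.val (p * q) :=
        Nat.dvd_gcd hdvd (dvd_mul_left q p)
      rcases dvd_prime_mul_prime hp.out hq.out hpq (Nat.gcd_dvd_right x.val (p * q)) with
        h | h | h | h
      · rw [h] at hq_dvd_gcd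
        have := Nat.le_of_dvd one_pos hq_dvd_gcd
        have := hq.out.one_lt
        omega
      · rw [h] at hq_dvd_gcd
        exact absurd hq_dvd_gcd hqp1
      · exact h
      · exact absurd ((eq_zero_iff_gcd p q x).mpr h) hx0
  rw [hset, Finset.card_erase_of_mem (by
    refine Finset.mem_filter.mpr ⟨Finset.mem_univ _, ?_⟩
    rw [ZMod.val_zero]
    exact dvd_zero q)]
  rw [card_multiples p q hp.out.pos hq.out.pos rfl]

lemma card_kcl_two (hpq : p ≠ q) [NeZero (p * q)] :
    (Finset.univ.filter fun x : ZMod (p * q) => kcl p q x = 2).card = q - 1 := by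
  obtain ⟨hppq, hqpq, hpq1, hqp1⟩ := basic_facts p q hpq
  have hset : (Finset.univ.filter fun x : ZMod (p * q) => kcl p q x = 2)
      = (Finset.univ.filter fun x : ZMod (p * q) => p ∣ x.val).erase 0 := by
    ext x
    simp only [Finset.mem_filter, Finset.mem_univ, true_and, Finset.mem_erase]
    rw [kcl_eq_two_iff p q hpq]
    constructor
    · intro h
      refine ⟨?_, Dvd.dvd.trans (dvd_of_eq h.symm) (Nat.gcd_dvd_left _ _)⟩
      intro hx0
      have h2 := (eq_zero_iff_gcd p q x).mp hx0
      rw [h] at h2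
      exact hppq h2
    · rintro ⟨hx0, hdvd⟩
      have hp_dvd_gcd : p ∣ Nat.gcd x.val (p * q) :=
        Nat.dvd_gcd hdvd (dvd_mul_right p q)
      rcases dvd_prime_mul_prime hp.out hq.out hpq (Nat.gcd_dvd_right x.val (p * q)) with
        h | h | h | h
      · rw [h] at hp_dvd_gcd
        have := Nat.le_of_dvd one_pos hp_dvd_gcd
        have := hp.out.one_lt
        omega
      · exact h
      · rw [h] at hp_dvd_gcd
        exact absurd hp_dvd_gcd hpq1
      · exact absurd ((eq_zero_iff_gcd p q x).mpr h) hx0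
  rw [hset, Finset.card_erase_of_mem (by
    refine Finset.mem_filter.mpr ⟨Finset.mem_univ _, ?_⟩
    rw [ZMod.val_zero]
    exact dvd_zero p)]
  rw [card_multiples q p hq.out.pos hp.out.pos (mul_comm p q)]

lemma card_kcl_partition [NeZero (p * q)] :
    (Finset.univ.filter fun x : ZMod (p * q) => kcl p q x = 0).card
      + (Finset.univ.filter fun x : ZMod (p * q) => kcl p q x = 1).card
      + (Finset.univ.filter fun x : ZMod (p * q) => kcl p q x = 2).card = p * q := by
  have h := Finset.card_eq_sum_card_fiberwise
    (f := kcl p q) (s := Finset.univ) (t := Finset.univ) (fun x _ => Finset.mem_univ _)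
  rw [Finset.card_univ, ZMod.card, Fin.sum_univ_three] at h
  omega

lemma lift_mul [NeZero (p * q)] (m1 m2 : Fin 3 → Fin 3 → ℝ) :
    (Matrix.of fun x y : ZMod (p * q) => m1 (kcl p q x) (kcl p q y)) *
      (Matrix.of fun x y : ZMod (p * q) => m2 (kcl p q x) (kcl p q y)) =
    Matrix.of (fun x y : ZMod (p * q) => ∑ j,
      (((Finset.univ.filter fun z : ZMod (p * q) => kcl p q z = j).card : ℝ))
        * m1 (kcl p q x) j * m2 j (kcl p q y)) := by
  ext x y
  rw [Matrix.mul_apply, Matrix.of_apply]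
  rw [← Finset.sum_fiberwise Finset.univ (fun z : ZMod (p * q) => kcl p q z)
    (fun z => (Matrix.of fun x y : ZMod (p * q) => m1 (kcl p q x) (kcl p q y)) x z *
      (Matrix.of fun x y : ZMod (p * q) => m2 (kcl p q x) (kcl p q y)) z y)]
  refine Finset.sum_congr rfl fun j _ => ?_
  rw [Finset.sum_congr rfl (fun z hz => by
    rw [Matrix.of_apply, Matrix.of_apply, (Finset.mem_filter.mp hz).2]),
    Finset.sum_const, nsmul_eq_mul]
  ring

end Main

end PGaux

open Polynomial

/-- The distance spectral radius of the power graph of `ZMod (p * q)` (`p, q` distinct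
primes) is a root of the stated cubic. -/
theorem distSpectralRadius_powerGraph_zmod_pq_cubic
    (p q : ℕ) [Fact p.Prime] [Fact q.Prime] (hpq : p ≠ q) (rho : ℝ)
    (hrho : IsGreatest (spectrum ℝ (distMatrix (addPowerGraph (ZMod (p * q))))) rho) :
    rho ^ 3 - ((p : ℝ) * q - 3) * rho ^ 2 - (5 * (p : ℝ) * q - 3 * p - 3 * q) * rho +
      ((p : ℝ) ^ 2 * q ^ 2 - 2 * p ^ 2 * q - 2 * p * q ^ 2 + p ^ 2 + p * q + q ^ 2) = 0 := by
  classical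
  obtain ⟨hrmem, hub⟩ := hrho
  have hp : Fact p.Prime := inferInstance
  have hq : Fact q.Prime := inferInstance
  set D := distMatrix (addPowerGraph (ZMod (p * q))) with hD
  -- the class-size function
  set ncf : Fin 3 → ℝ := fun j =>
    (((Finset.univ.filter fun z : ZMod (p * q) => PGaux.kcl p q z = j).card : ℝ)) with hncf
  -- the lift of a 3×3 block matrix
  set L : (Fin 3 → Fin 3 → ℝ) → Matrix (ZMod (p * q)) (ZMod (p * q)) ℝ :=
    fun m => Matrix.of fun x y => m (PGaux.kcl p q x) (PGaux.kcl p q y) with hL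
  -- class sizes
  have hnc1 : ncf 1 = (p : ℝ) - 1 := by
    rw [hncf]
    simp only
    rw [PGaux.card_kcl_one p q hpq, Nat.cast_sub hp.out.one_le, Nat.cast_one]
  have hnc2 : ncf 2 = (q : ℝ) - 1 := by
    rw [hncf]
    simp only
    rw [PGaux.card_kcl_two p q hpq, Nat.cast_sub hq.out.one_le, Nat.cast_one]
  have hnc0 : ncf 0 = (p : ℝ) * q - p - q + 2 := by
    have hpart := PGaux.card_kcl_partition p q
    rw [PGaux.card_kcl_one p q hpq, PGaux.card_kcl_two p q hpq] at hpart
    have hcast := congrArg (Nat.cast : ℕ → ℝ) hpart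
    push_cast [Nat.cast_sub hp.out.one_le, Nat.cast_sub hq.out.one_le] at hcast
    rw [hncf]
    simp only
    linarith
  -- D + 1 is the lifted block matrix
  have hD1 : D + 1 = L PGaux.bmat := by
    ext x y
    rw [Matrix.add_apply, Matrix.one_apply, hL]
    show distMatrix (addPowerGraph (ZMod (p * q))) x y + _ = _
    show ((addPowerGraph (ZMod (p * q))).dist x y : ℝ) + _ = _
    rw [PGaux.dist_entry p q hpq x y]
    by_cases h : x = y <;> simp [h]
  have hmul : ∀ m : Fin 3 → Fin 3 → ℝ,
      L m * L PGaux.bmat = L (PGaux.mstep ncf m) := by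
    intro m
    exact PGaux.lift_mul p q m PGaux.bmat
  have hpow2 : L PGaux.bmat ^ 2 = L (PGaux.mstep ncf PGaux.bmat) := by
    rw [sq]; exact hmul _
  have hpow3 : L PGaux.bmat ^ 3 = L (PGaux.mstep ncf (PGaux.mstep ncf PGaux.bmat)) := by
    rw [pow_succ, hpow2]; exact hmul _
  have hpow4 : L PGaux.bmat ^ 4
      = L (PGaux.mstep ncf (PGaux.mstep ncf (PGaux.mstep ncf PGaux.bmat))) := by
    rw [pow_succ, hpow3]; exact hmul _
  -- the annihilating polynomial
  set c3 : ℝ := -((p : ℝ) * q) with hc3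
  set c2 : ℝ := -3 * (p : ℝ) * q + 3 * (p : ℝ) + 3 * (q : ℝ) - 3 with hc2
  set c1 : ℝ := (p : ℝ) ^ 2 * q ^ 2 - 2 * (p : ℝ) ^ 2 * q - 2 * (p : ℝ) * q ^ 2 + (p : ℝ) ^ 2
      + (q : ℝ) ^ 2 + 5 * (p : ℝ) * q - 3 * (p : ℝ) - 3 * (q : ℝ) + 2 with hc1
  have haeval : (Polynomial.aeval D)
      ((X + C 1) ^ 4 + C c3 * (X + C 1) ^ 3 + C c2 * (X + C 1) ^ 2 + C c1 * (X + C 1)) = 0 := by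
    simp only [map_add, map_mul, map_pow, Polynomial.aeval_X, Polynomial.aeval_C, map_one]
    rw [← Algebra.smul_def, ← Algebra.smul_def, ← Algebra.smul_def]
    rw [hD1, hpow4, hpow3, hpow2]
    ext x y
    simp only [Matrix.add_apply, Matrix.smul_apply, Matrix.zero_apply, smul_eq_mul, hL,
      Matrix.of_apply]
    have hkey := PGaux.key_identity (p : ℝ) (q : ℝ) ncf hnc0 hnc1 hnc2
      (PGaux.kcl p q x) (PGaux.kcl p q y)
    rw [hc3, hc2, hc1]
    linarith
  -- spectral mapping
  haveI : Nontrivial (Matrix (ZMod (p * q)) (ZMod (p * q)) ℝ) := by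
    refine ⟨0, 1, fun h => ?_⟩
    have h00 := congrFun (congrFun h 0) 0
    simp [Matrix.one_apply] at h00
  have hsub := spectrum.subset_polynomial_aeval D
      ((X + C 1) ^ 4 + C c3 * (X + C 1) ^ 3 + C c2 * (X + C 1) ^ 2 + C c1 * (X + C 1))
  rw [haeval, spectrum.zero_eq] at hsub
  have hev0 := hsub ⟨rho, hrmem, rfl⟩
  simp only [Set.mem_singleton_iff, Polynomial.eval_add, Polynomial.eval_mul,
    Polynomial.eval_pow, Polynomial.eval_X, Polynomial.eval_C] at hev0
  rw [hc3, hc2, hc1] at hev0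
  -- rho ≠ -1 via the trace of the distance matrix
  have hherm : D.IsHermitian := by
    unfold Matrix.IsHermitian
    ext x y
    rw [Matrix.conjTranspose_apply, star_trivial, hD]
    show ((addPowerGraph (ZMod (p * q))).dist y x : ℝ)
      = ((addPowerGraph (ZMod (p * q))).dist x y : ℝ)
    rw [SimpleGraph.dist_comm]
  have htr : D.trace = 0 := by
    rw [hD]
    unfold Matrix.trace
    simp [Matrix.diag, distMatrix, SimpleGraph.dist_self]
  have hsum : ∑ i, hherm.eigenvalues i = 0 := by
    have h1 : D.trace = (Matrix.diagonal ((RCLike.ofReal : ℝ → ℝ) ∘ hherm.eigenvalues)).trace := by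
      conv_lhs => rw [hherm.spectral_theorem]
      rw [Unitary.conjStarAlgAut_apply]
      rw [Matrix.trace_mul_cycle, Unitary.coe_star_mul_self, one_mul]
    rw [htr, Matrix.trace_diagonal] at h1
    have h2 : ∀ i, ((RCLike.ofReal : ℝ → ℝ) ∘ hherm.eigenvalues) i = hherm.eigenvalues i := by
      intro i
      simp [RCLike.ofReal_real_eq_id]
    rw [Finset.sum_congr rfl (fun i _ => h2 i)] at h1
    linarith [h1]
  have hne : rho ≠ -1 := by
    intro hrho1
    have hub' : ∀ i, hherm.eigenvalues i ≤ -1 := by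
      intro i
      have := hub (hherm.eigenvalues_mem_spectrum_real i)
      rw [hrho1] at this
      exact this
    have hle : ∑ i, hherm.eigenvalues i ≤ ∑ _i : ZMod (p * q), (-1 : ℝ) :=
      Finset.sum_le_sum (fun i _ => hub' i)
    rw [Finset.sum_const, Finset.card_univ, ZMod.card, nsmul_eq_mul] at hle
    have hpq1 : (1 : ℝ) ≤ ((p * q : ℕ) : ℝ) := by
      have : 1 ≤ p * q := Nat.one_le_iff_ne_zero.mpr (NeZero.ne _)
      exact_mod_cast this
    rw [hsum] at hle
    nlinarith
  -- conclude
  have hfac : (rho + 1) * (rho ^ 3 - ((p : ℝ) * q - 3) * rho ^ 2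
      - (5 * (p : ℝ) * q - 3 * p - 3 * q) * rho +
      ((p : ℝ) ^ 2 * q ^ 2 - 2 * p ^ 2 * q - 2 * p * q ^ 2 + p ^ 2 + p * q + q ^ 2)) = 0 := by
    linear_combination hev0
  rcases mul_eq_zero.mp hfac with h | h
  · exact absurd (by linarith) hne
  · exact h
end
end
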